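/- Let c₁, c₂, n₁, n₂ be positive integers and for each i ∈ {1,…,c₁} and j ∈ {1,…,c₂} let G_{i,j} and H_{i,j} be real n₁×n₂ matrices. Let G̃ and H̃ be the (c₁·c₂)×(n₁·n₂) matrices whose rows, listed in the order (1,1),(1,2),…,(1,c₂),(2,1),…,(c₁,c₂) (the second index varying fastest), are vec(G_{i,j})ᵀ and vec(H_{i,j})ᵀ respectively. Then vec( ∑_{i=1}^{c₁} ∑_{j=1}^{c₂} G_{i,j} ⊗ H_{i,j} ) = ( I_{n₂} ⊗ K_{n₁,n₂} ⊗ I_{n₁} ) · vec( H̃ᵀ · G̃ ), where ⊗ denotes the Kronecker product. -/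

import Mathlib

open Matrix

/-- Column-major vectorization of a matrix. -/
def vec {α β R : Type*} (A : Matrix α β R) : β × α → R := fun p => A p.2 p.1

/-- The commutation matrix `K_{m,n}`: the unique `mn × mn` matrix satisfying
`vec A = K_{m,n} · vec Aᵀ` for every `m × n` matrix `A` (column-major `vec`).  Its rows are
indexed like `vec` of an `m × n` matrix and its columns like `vec` of an `n × m` matrix. -/
def commMatR (m n : ℕ) : Matrix (Fin n × Fin m) (Fin m × Fin n) ℝ := fun a b =>
  if b.1 = a.2 ∧ b.2 = a.1 then 1 else 0

/-- With `G̃`, `H̃` the matrices whose `(i,j)`-th rows are `vec(G_{i,j})ᵀ`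
and `vec(H_{i,j})ᵀ`, one has
`vec(∑_i ∑_j G_{i,j} ⊗ H_{i,j}) = (I_{n₂} ⊗ K_{n₁,n₂} ⊗ I_{n₁}) · vec(H̃ᵀ G̃)`
(the index types on the two sides are identified by the canonical flattening of nested
products, made explicit below). -/
theorem stmt15 (c₁ c₂ n₁ n₂ : ℕ) (hc₁ : 0 < c₁) (hc₂ : 0 < c₂) (hn₁ : 0 < n₁) (hn₂ : 0 < n₂)
    (G H : Fin c₁ → Fin c₂ → Matrix (Fin n₁) (Fin n₂) ℝ)
    (Gt Ht : Matrix (Fin c₁ × Fin c₂) (Fin n₂ × Fin n₁) ℝ)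
    (hGt : ∀ (i : Fin c₁) (j : Fin c₂) (v : Fin n₂ × Fin n₁), Gt (i, j) v = _root_.vec (G i j) v)
    (hHt : ∀ (i : Fin c₁) (j : Fin c₂) (v : Fin n₂ × Fin n₁), Ht (i, j) v = _root_.vec (H i j) v)
    -- `P = I_{n₂} ⊗ K_{n₁,n₂} ⊗ I_{n₁}`
    (P : Matrix (Fin n₂ × ((Fin n₂ × Fin n₁) × Fin n₁))
      (Fin n₂ × ((Fin n₁ × Fin n₂) × Fin n₁)) ℝ)
    (hP : P = kroneckerMap (· * ·) (1 : Matrix (Fin n₂) (Fin n₂) ℝ)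
      (kroneckerMap (· * ·) (commMatR n₁ n₂) (1 : Matrix (Fin n₁) (Fin n₁) ℝ))) :
    ∀ (b₁ b₂ : Fin n₂) (a₁ a₂ : Fin n₁),
      _root_.vec (∑ i, ∑ j, kroneckerMap (· * ·) (G i j) (H i j)) ((b₁, b₂), (a₁, a₂)) =
        P.mulVec
          (fun c => _root_.vec (Htᵀ * Gt) ((c.1, c.2.1.1), (c.2.1.2, c.2.2)))
          (b₁, ((b₂, a₁), a₂)) := by
  intro b₁ b₂ a₁ a₂
  subst hP
  simp only [_root_.vec, Matrix.sum_apply, kroneckerMap_apply, mulVec, dotProduct,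
    Matrix.mul_apply, commMatR, Matrix.one_apply, Fintype.sum_prod_type, transpose_apply,
    mul_ite, mul_one, mul_zero, ite_mul, one_mul, zero_mul]
  simp only [ite_and, Finset.sum_ite_eq, Finset.sum_ite_eq', Finset.mem_univ, if_true]
  simp [hGt, hHt, _root_.vec, Finset.mul_sum, Finset.sum_mul, Fintype.sum_prod_type, mul_comm]
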